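/- For all integers $k, n \ge 2$, $\int_{-1}^{1} \tilde P_k(z)\,\tilde P_n(z)\,dz = c_n\,\delta_{kn}$, where $c_n = \frac{2n(n+1)}{(n-1)(n+2)(2n+1)}$ and $\delta_{kn}$ is the Kronecker delta. -/

import Mathlib

/-- Legendre polynomials via Rodrigues' formula:
`P_n(z) = (1 / (2^n n!)) dⁿ/dzⁿ [(z²-1)ⁿ]`. -/
noncomputable def legendreP (n : ℕ) (z : ℝ) : ℝ :=
  (1 / (2 ^ n * (Nat.factorial n) : ℝ)) * iteratedDeriv n (fun x : ℝ => (x ^ 2 - 1) ^ n) z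

/-- `P̃_n(z) = (1/(n+2)) (n P_n(z) - (2/(n-1)) P_{n-1}'(z))` for `n ≥ 2`. -/
noncomputable def tildeP (n : ℕ) (z : ℝ) : ℝ :=
  (1 / ((n : ℝ) + 2)) *
    ((n : ℝ) * legendreP n z - (2 / ((n : ℝ) - 1)) * deriv (legendreP (n - 1)) z)


open Polynomial intervalIntegral


noncomputable def W (n : ℕ) : ℝ[X] := ((X : ℝ[X]) ^ 2 - 1) ^ n

noncomputable def L (n : ℕ) : ℝ[X] :=
  C (1 / (2 ^ n * (Nat.factorial n) : ℝ)) * derivative^[n] (W n)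

lemma iteratedDeriv_eval (p : ℝ[X]) (k : ℕ) :
    iteratedDeriv k (fun x : ℝ => p.eval x) = fun z => (derivative^[k] p).eval z := by
  induction k with
  | zero => simp
  | succ k ih =>
    rw [iteratedDeriv_succ, ih, Function.iterate_succ_apply']
    funext z
    exact Polynomial.deriv _

lemma legendreP_eq (n : ℕ) : legendreP n = fun z => (L n).eval z := by
  funext z
  have : (fun x : ℝ => (x ^ 2 - 1) ^ n) = fun x : ℝ => (W n).eval x := by
    funext x; simp [W]
  rw [legendreP, this, iteratedDeriv_eval]
  simp [L]

lemma deriv_legendreP (n : ℕ) (z : ℝ) :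
    deriv (legendreP n) z = (derivative (L n)).eval z := by
  rw [legendreP_eq]; exact Polynomial.deriv _

lemma natDegree_W (n : ℕ) : (W n).natDegree = 2 * n := by
  have h : ((X : ℝ[X]) ^ 2 - 1).natDegree = 2 := by
    compute_degree!
  have : ((X : ℝ[X]) ^ 2 - 1) ≠ 0 := by
    intro h0; rw [h0] at h; simp at h
  rw [W, natDegree_pow, h, mul_comm]

lemma natDegree_L (n : ℕ) : (L n).natDegree ≤ n := by
  refine (natDegree_C_mul_le _ _).trans ?_
  refine (natDegree_iterate_derivative _ _).trans ?_
  rw [natDegree_W]; omega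

-- continuity / integrability helpers
lemma contPoly (p : ℝ[X]) : Continuous (fun x : ℝ => p.eval x) := p.continuous

lemma intOn (p : ℝ[X]) (a b : ℝ) :
    IntervalIntegrable (fun x : ℝ => p.eval x) MeasureTheory.volume a b :=
  (contPoly p).intervalIntegrable a b

/-- Integration by parts for polynomials on [-1,1]. -/
lemma ibp (p q : ℝ[X]) :
    ∫ x in (-1 : ℝ)..1, (derivative p).eval x * q.eval x =
      p.eval 1 * q.eval 1 - p.eval (-1) * q.eval (-1) -
        ∫ x in (-1 : ℝ)..1, p.eval x * (derivative q).eval x := by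
  have h := intervalIntegral.integral_deriv_mul_eq_sub
    (u := fun x : ℝ => p.eval x) (v := fun x : ℝ => q.eval x)
    (u' := fun x : ℝ => (derivative p).eval x) (v' := fun x : ℝ => (derivative q).eval x)
    (a := (-1 : ℝ)) (b := 1)
    (fun x _ => p.hasDerivAt x) (fun x _ => q.hasDerivAt x)
    (intOn _ _ _) (intOn _ _ _)
  rw [intervalIntegral.integral_add (f := fun x => (derivative p).eval x * q.eval x)
      (g := fun x => p.eval x * (derivative q).eval x)
      (((contPoly (derivative p)).mul (contPoly q)).intervalIntegrable _ _)
      (((contPoly p).mul (contPoly (derivative q))).intervalIntegrable _ _)] at h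
  linarith

/-- deriv^[j] (W n) is divisible by (X^2-1)^(n-j). -/
lemma W_iterate_dvd (n j : ℕ) (hj : j ≤ n) :
    ((X : ℝ[X]) ^ 2 - 1) ^ (n - j) ∣ derivative^[j] (W n) := by
  induction j with
  | zero => simp [W]
  | succ j ih =>
    obtain ⟨g, hg⟩ := ih (by omega)
    rw [Function.iterate_succ_apply', hg]
    have hnj : n - j = (n - (j+1)) + 1 := by omega
    rw [hnj]
    refine ⟨C ((((n - (j+1)) + 1 : ℕ)) : ℝ) * derivative ((X : ℝ[X]) ^ 2 - 1) * g
      + ((X : ℝ[X]) ^ 2 - 1) * derivative g, ?_⟩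
    rw [derivative_mul, derivative_pow, Nat.add_sub_cancel]
    ring

lemma W_eval_one (n j : ℕ) (hj : j < n) :
    (derivative^[j] (W n)).eval 1 = 0 := by
  obtain ⟨g, hg⟩ := W_iterate_dvd n j hj.le
  rw [hg]
  have : n - j ≠ 0 := by omega
  simp [this, zero_pow]

lemma W_eval_neg_one (n j : ℕ) (hj : j < n) :
    (derivative^[j] (W n)).eval (-1) = 0 := by
  obtain ⟨g, hg⟩ := W_iterate_dvd n j hj.le
  rw [hg]
  have : n - j ≠ 0 := by omega
  simp [this, zero_pow]

/-- Iterated integration by parts against the Rodrigues kernel. -/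
lemma ibp_iterate (n : ℕ) (m : ℕ) (hm : m ≤ n) (f : ℝ[X]) :
    (∫ x in (-1 : ℝ)..1, f.eval x * (derivative^[n] (W n)).eval x) =
      (-1 : ℝ) ^ m *
        ∫ x in (-1 : ℝ)..1, (derivative^[m] f).eval x * (derivative^[n - m] (W n)).eval x := by
  induction m with
  | zero => simp
  | succ m ih =>
    rw [ih (by omega)]
    have hstep : n - m = (n - (m + 1)) + 1 := by omega
    have h2 : (∫ x in (-1 : ℝ)..1,
        (derivative^[m] f).eval x * (derivative^[n - m] (W n)).eval x) =
        - ∫ x in (-1 : ℝ)..1,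
          (derivative^[m + 1] f).eval x * (derivative^[n - (m+1)] (W n)).eval x := by
      have hW : derivative^[n - m] (W n) = derivative (derivative^[n-(m+1)] (W n)) := by
        rw [hstep, Function.iterate_succ_apply']
      have := ibp (derivative^[n - (m+1)] (W n)) (derivative^[m] f)
      rw [← hW] at this
      rw [W_eval_one n _ (by omega), W_eval_neg_one n _ (by omega)] at this
      have hcomm : (∫ x in (-1 : ℝ)..1,
          (derivative^[n-m] (W n)).eval x * (derivative^[m] f).eval x) =
          ∫ x in (-1 : ℝ)..1,
            (derivative^[m] f).eval x * (derivative^[n-m] (W n)).eval x := by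
        congr 1; funext x; ring
      have hcomm2 : (∫ x in (-1 : ℝ)..1,
          (derivative^[n-(m+1)] (W n)).eval x * (derivative (derivative^[m] f)).eval x) =
          ∫ x in (-1 : ℝ)..1,
            (derivative^[m+1] f).eval x * (derivative^[n-(m+1)] (W n)).eval x := by
        rw [← Function.iterate_succ_apply' derivative]
        congr 1; funext x; ring
      rw [hcomm, hcomm2] at this
      linarith
    rw [h2, pow_succ]
    ring

noncomputable def I2 (p q : ℝ[X]) : ℝ := ∫ x in (-1 : ℝ)..1, p.eval x * q.eval x

lemma I2_symm (p q : ℝ[X]) : I2 p q = I2 q p := by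
  unfold I2; congr 1; funext x; ring

lemma I2_C_mul (a : ℝ) (p q : ℝ[X]) : I2 (C a * p) q = a * I2 p q := by
  unfold I2
  rw [← intervalIntegral.integral_const_mul]
  congr 1; funext x; simp; ring

lemma I2_sub (p q r : ℝ[X]) : I2 (p - q) r = I2 p r - I2 q r := by
  unfold I2
  rw [← intervalIntegral.integral_sub (f := fun x => p.eval x * r.eval x)
    (g := fun x => q.eval x * r.eval x) (((contPoly p).mul (contPoly r)).intervalIntegrable _ _)
    (((contPoly q).mul (contPoly r)).intervalIntegrable _ _)]
  congr 1; funext x; simp; ring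

/-- Orthogonality to all lower-degree polynomials. -/
lemma I2_L_eq_zero (n : ℕ) (f : ℝ[X]) (hf : f.natDegree < n) : I2 f (L n) = 0 := by
  unfold I2 L
  have : (∫ x in (-1:ℝ)..1, f.eval x *
      (C (1 / (2 ^ n * (Nat.factorial n) : ℝ)) * derivative^[n] (W n)).eval x) =
      (1 / (2 ^ n * (Nat.factorial n) : ℝ)) *
      ∫ x in (-1:ℝ)..1, f.eval x * (derivative^[n] (W n)).eval x := by
    rw [← intervalIntegral.integral_const_mul]
    congr 1; funext x; simp; ring
  rw [this, ibp_iterate n n le_rfl f, iterate_derivative_eq_zero hf]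
  simp

lemma J_formula (n : ℕ) :
    (∫ x in (-1 : ℝ)..1, (W n).eval x) =
      (-1 : ℝ) ^ n * 2 * 4 ^ n * (Nat.factorial n : ℝ) ^ 2 / (Nat.factorial (2 * n + 1)) := by
  induction n with
  | zero => norm_num [W]
  | succ n ih =>
    -- d/dx [x (x²-1)^{n+1}] = (2n+3)(x²-1)^{n+1} + 2(n+1)(x²-1)^n
    have hderiv : derivative ((X : ℝ[X]) * W (n+1)) =
        C ((2 * n + 3 : ℕ) : ℝ) * W (n+1) + C ((2 * (n+1) : ℕ) : ℝ) * W n := by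
      unfold W
      rw [derivative_mul, derivative_pow, derivative_X]
      have h1 : derivative ((X : ℝ[X]) ^ 2 - 1) = C 2 * X := by
        simp [derivative_sub, derivative_one, derivative_X_pow]
        norm_num [show (C (2:ℝ) : ℝ[X]) = 2 from map_ofNat C 2]
      rw [h1, Nat.add_sub_cancel]
      have e1 : ((X : ℝ[X]) ^ 2 - 1) ^ (n + 1) = ((X:ℝ[X])^2 - 1) * ((X:ℝ[X])^2-1)^n := by
        ring
      rw [e1]
      simp only [C_eq_natCast, map_ofNat]
      push_cast
      ring
    have hint : (∫ x in (-1:ℝ)..1, (derivative ((X : ℝ[X]) * W (n+1))).eval x) =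
        ((X : ℝ[X]) * W (n+1)).eval 1 - ((X : ℝ[X]) * W (n+1)).eval (-1) := by
      have := ibp ((X : ℝ[X]) * W (n+1)) 1
      simpa using this
    have hb : ((X : ℝ[X]) * W (n+1)).eval 1 = 0 ∧ ((X : ℝ[X]) * W (n+1)).eval (-1) = 0 := by
      constructor <;> simp [W]
    rw [hb.1, hb.2, sub_zero] at hint
    have hsplit : (∫ x in (-1:ℝ)..1, (derivative ((X : ℝ[X]) * W (n+1))).eval x) =
        ((2 * n + 3 : ℕ) : ℝ) * (∫ x in (-1:ℝ)..1, (W (n+1)).eval x) +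
        ((2 * (n+1) : ℕ) : ℝ) * (∫ x in (-1:ℝ)..1, (W n).eval x) := by
      have heq : (fun x : ℝ => (derivative ((X : ℝ[X]) * W (n+1))).eval x) =
          fun x : ℝ => ((2 * n + 3 : ℕ) : ℝ) * (W (n+1)).eval x +
            ((2 * (n+1) : ℕ) : ℝ) * (W n).eval x := by
        funext x; rw [hderiv]; simp
      calc (∫ x in (-1:ℝ)..1, (derivative ((X : ℝ[X]) * W (n+1))).eval x)
          = ∫ x in (-1:ℝ)..1, (((2 * n + 3 : ℕ) : ℝ) * (W (n+1)).eval x +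
              ((2 * (n+1) : ℕ) : ℝ) * (W n).eval x) := by rw [heq]
        _ = _ := by
            rw [intervalIntegral.integral_add
              (f := fun x => ((2 * n + 3 : ℕ) : ℝ) * (W (n+1)).eval x)
              (g := fun x => ((2 * (n+1) : ℕ) : ℝ) * (W n).eval x)
              ((continuous_const.mul (contPoly (W (n+1)))).intervalIntegrable _ _)
              ((continuous_const.mul (contPoly (W n))).intervalIntegrable _ _),
              intervalIntegral.integral_const_mul, intervalIntegral.integral_const_mul]
    rw [hint, ih] at hsplit
    have h23 : ((2 * n + 3 : ℕ) : ℝ) ≠ 0 := by positivity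
    have key : (∫ x in (-1:ℝ)..1, (W (n+1)).eval x) =
        - ((2 * (n+1) : ℕ) : ℝ) / ((2 * n + 3 : ℕ) : ℝ) *
          ((-1 : ℝ) ^ n * 2 * 4 ^ n * (Nat.factorial n : ℝ) ^ 2 / (Nat.factorial (2 * n + 1))) := by
      field_simp at hsplit ⊢
      linarith
    rw [key]
    have hfac1 : (Nat.factorial (2 * (n+1) + 1) : ℝ) =
        ((2*n+3 : ℕ) : ℝ) * ((2*n+2 : ℕ) : ℝ) * (Nat.factorial (2*n+1) : ℝ) := by
      have : 2 * (n+1) + 1 = (2*n+2) + 1 := by ring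
      rw [this]
      rw [Nat.factorial_succ]
      have : (2*n+2) = (2*n+1) + 1 := by ring
      rw [this, Nat.factorial_succ]
      push_cast
      ring
    have hfac2 : (Nat.factorial (n+1) : ℝ) = ((n:ℝ)+1) * (Nat.factorial n : ℝ) := by
      rw [Nat.factorial_succ]; push_cast; ring
    have hne1 : (Nat.factorial (2*n+1) : ℝ) ≠ 0 := by positivity
    have hne2 : ((2*n+3 : ℕ) : ℝ) ≠ 0 := by positivity
    have hne3 : ((2*n+2 : ℕ) : ℝ) ≠ 0 := by positivity
    rw [hfac1, hfac2]
    push_cast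
    field_simp
    ring

lemma W_monic (n : ℕ) : (W n).Monic := by
  have : ((X : ℝ[X]) ^ 2 - 1).Monic := by
    have := Polynomial.monic_X_pow_sub_C (1 : ℝ) (n := 2) two_ne_zero
    simpa using this
  unfold W; exact this.pow n

lemma iterate_derivative_W_top (n : ℕ) :
    derivative^[2 * n] (W n) = C ((Nat.factorial (2 * n) : ℝ)) := by
  have hdeg : (derivative^[2*n] (W n)).natDegree ≤ 0 := by
    have := natDegree_iterate_derivative (W n) (2*n)
    rw [natDegree_W] at this; omega
  rw [eq_C_of_natDegree_le_zero hdeg]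
  congr 1
  rw [coeff_iterate_derivative]
  simp only [zero_add]
  have hc : (W n).coeff (2*n) = 1 := by
    have := (W_monic n).leadingCoeff
    rwa [leadingCoeff, natDegree_W] at this
  rw [hc, Nat.descFactorial_self]
  simp

lemma I2_L_self (n : ℕ) : I2 (L n) (L n) = 2 / (2 * (n : ℝ) + 1) := by
  have hL : I2 (L n) (L n) = (1 / (2 ^ n * (Nat.factorial n) : ℝ)) *
      ∫ x in (-1:ℝ)..1, (L n).eval x * (derivative^[n] (W n)).eval x := by
    have h0 : I2 (L n) (L n) =
        I2 (C (1 / (2 ^ n * (Nat.factorial n) : ℝ)) * derivative^[n] (W n)) (L n) := rfl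
    rw [h0, I2_C_mul, I2_symm]
    rfl
  rw [hL, ibp_iterate n n le_rfl (L n)]
  have hDL : derivative^[n] (L n) = C ((Nat.factorial (2*n) : ℝ) / (2 ^ n * (Nat.factorial n))) := by
    rw [L, iterate_derivative_C_mul, ← Function.iterate_add_apply]
    have : n + n = 2 * n := by ring
    rw [this, iterate_derivative_W_top, ← C_mul]
    congr 1
    ring
  rw [Nat.sub_self, Function.iterate_zero_apply, hDL]
  have : (∫ x in (-1:ℝ)..1,
      (C ((Nat.factorial (2*n) : ℝ) / (2 ^ n * (Nat.factorial n)))).eval x * (W n).eval x) =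
      ((Nat.factorial (2*n) : ℝ) / (2 ^ n * (Nat.factorial n))) * ∫ x in (-1:ℝ)..1, (W n).eval x := by
    rw [← intervalIntegral.integral_const_mul]
    congr 1; funext x; simp
  rw [this, J_formula]
  have hfac : (Nat.factorial (2*n+1) : ℝ) = ((2*n+1 : ℕ) : ℝ) * (Nat.factorial (2*n) : ℝ) := by
    rw [Nat.factorial_succ]; push_cast; ring
  have h1 : (Nat.factorial n : ℝ) ≠ 0 := by positivity
  have h2 : (Nat.factorial (2*n) : ℝ) ≠ 0 := by positivity
  have h3 : ((2*n+1 : ℕ) : ℝ) ≠ 0 := by positivity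
  have h4 : (2 : ℝ) ^ n ≠ 0 := by positivity
  have h5 : (4 : ℝ) ^ n = (2:ℝ)^n * (2:ℝ)^n := by
    rw [← mul_pow]; norm_num
  rw [hfac, h5]
  push_cast at h3 ⊢
  field_simp
  ring_nf
  rw [show ((-1:ℝ))^(n*2) = 1 by rw [mul_comm n 2, pow_mul]; norm_num]

lemma W_factor (m : ℕ) : W m = (X - C (1:ℝ)) ^ m * (X - C (-1:ℝ)) ^ m := by
  unfold W
  rw [← mul_pow]
  congr 1
  simp only [map_neg, map_one]
  ring

lemma evalWm_one (m : ℕ) :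
    (derivative^[m] (W m)).eval 1 = (Nat.factorial m : ℝ) * 2 ^ m := by
  rw [W_factor, iterate_derivative_mul, eval_finset_sum]
  rw [Finset.sum_eq_single 0]
  · rw [Nat.sub_zero, Function.iterate_zero_apply, iterate_derivative_X_sub_pow_self]
    simp
    norm_num
  · intro b hb hb0
    simp only [Finset.mem_range] at hb
    rw [iterate_derivative_X_sub_pow]
    have he : m - (m - b) = b := by omega
    rw [he]
    simp [zero_pow hb0]
  · intro h; simp at h

lemma evalWm_neg_one (m : ℕ) :
    (derivative^[m] (W m)).eval (-1) = (Nat.factorial m : ℝ) * (-2) ^ m := by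
  rw [W_factor, iterate_derivative_mul, eval_finset_sum]
  rw [Finset.sum_eq_single m]
  · rw [Nat.sub_self, Function.iterate_zero_apply, iterate_derivative_X_sub_pow_self]
    simp
    norm_num
    ring
  · intro b hb hb0
    simp only [Finset.mem_range] at hb
    rw [iterate_derivative_X_sub_pow (c := (-1:ℝ))]
    have hb' : m - b ≠ 0 := by omega
    simp [zero_pow hb']
  · intro h; simp at h

lemma evalWm1_one (m : ℕ) :
    (derivative^[m + 2] (W (m + 1))).eval 1 =
      ((m : ℝ) + 2) * (Nat.factorial (m + 1) : ℝ) * ((m : ℝ) + 1) * 2 ^ m := by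
  rw [W_factor, iterate_derivative_mul, eval_finset_sum]
  rw [Finset.sum_eq_single 1]
  · rw [iterate_derivative_X_sub_pow, iterate_derivative_X_sub_pow]
    have h1 : m + 2 - 1 = m + 1 := by omega
    have h2 : m + 1 - (m + 1) = 0 := by omega
    have h3 : m + 1 - 1 = m := by omega
    rw [h1, h2, h3]
    have hdesc : (m + 1).descFactorial m = Nat.factorial (m + 1) := by
      have ha := Nat.descFactorial_succ (m + 1) m
      have hb := Nat.descFactorial_self (m + 1)
      simp only [Nat.add_sub_cancel_left] at ha
      omega
    simp [Nat.descFactorial_self, Nat.descFactorial_one, hdesc]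
    push_cast
    ring
  · intro b hb hb0
    simp only [Finset.mem_range] at hb
    rcases Nat.lt_or_ge b 2 with h | h
    · interval_cases b
      · rw [iterate_derivative_X_sub_pow]
        have : m + 1 < m + 2 - 0 := by omega
        simp [Nat.descFactorial_eq_zero_iff_lt.mpr this]
      · omega
    · rw [iterate_derivative_X_sub_pow]
      have he : m + 1 - (m + 2 - b) = b - 1 := by omega
      rw [he]
      have : b - 1 ≠ 0 := by omega
      simp [zero_pow this]
  · intro h; simp at h

lemma evalWm1_neg_one (m : ℕ) :
    (derivative^[m + 2] (W (m + 1))).eval (-1) =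
      ((m : ℝ) + 2) * (Nat.factorial (m + 1) : ℝ) * ((m : ℝ) + 1) * (-2) ^ m := by
  rw [W_factor, iterate_derivative_mul, eval_finset_sum]
  rw [Finset.sum_eq_single (m + 1)]
  · rw [iterate_derivative_X_sub_pow, iterate_derivative_X_sub_pow]
    have h1 : m + 2 - (m + 1) = 1 := by omega
    have h2 : m + 1 - 1 = m := by omega
    have h3 : m + 1 - (m + 1) = 0 := by omega
    rw [h1, h2, h3]
    have hdesc : (m + 1).descFactorial m = Nat.factorial (m + 1) := by
      have ha := Nat.descFactorial_succ (m + 1) m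
      have hb := Nat.descFactorial_self (m + 1)
      simp only [Nat.add_sub_cancel_left] at ha
      omega
    simp [Nat.descFactorial_self, Nat.descFactorial_one, hdesc]
    push_cast
    ring
  · intro b hb hb0
    simp only [Finset.mem_range] at hb
    rcases Nat.lt_or_ge b (m + 1) with h | h
    · rw [iterate_derivative_X_sub_pow (c := (-1:ℝ))]
      have : m + 1 - b ≠ 0 := by omega
      simp [zero_pow this]
    · have hb2 : b = m + 2 := by omega
      subst hb2
      rw [iterate_derivative_X_sub_pow (c := (-1:ℝ))]
      have : m + 1 < m + 2 := by omega
      simp [Nat.descFactorial_eq_zero_iff_lt.mpr this]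
  · intro h; simp at h

lemma L_eval_one (m : ℕ) : (L m).eval 1 = 1 := by
  rw [L]
  simp only [eval_mul, eval_C]
  rw [evalWm_one]
  have h1 : (Nat.factorial m : ℝ) ≠ 0 := by positivity
  have h2 : (2 : ℝ) ^ m ≠ 0 := by positivity
  field_simp

lemma L_eval_neg_one (m : ℕ) : (L m).eval (-1) = (-1 : ℝ) ^ m := by
  rw [L]
  simp only [eval_mul, eval_C]
  rw [evalWm_neg_one]
  have h1 : (Nat.factorial m : ℝ) ≠ 0 := by positivity
  have h2 : (-2 : ℝ) ^ m = (-1 : ℝ) ^ m * 2 ^ m := by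
    rw [← mul_pow]; norm_num
  rw [h2]
  have h3 : (2 : ℝ) ^ m ≠ 0 := by positivity
  field_simp

lemma derivative_L (m : ℕ) :
    derivative (L m) = C (1 / (2 ^ m * (Nat.factorial m) : ℝ)) * derivative^[m + 1] (W m) := by
  rw [L, derivative_C_mul, Function.iterate_succ_apply']

lemma dL_eval_one (m : ℕ) :
    (derivative (L (m + 1))).eval 1 = ((m : ℝ) + 1) * ((m : ℝ) + 2) / 2 := by
  rw [derivative_L]
  simp only [eval_mul, eval_C]
  rw [show m + 1 + 1 = m + 2 from rfl, evalWm1_one]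
  have h1 : (Nat.factorial (m + 1) : ℝ) ≠ 0 := by positivity
  have h2 : (2 : ℝ) ^ (m + 1) = 2 * 2 ^ m := by ring
  rw [h2]
  have h3 : (2 : ℝ) ^ m ≠ 0 := by positivity
  field_simp

lemma dL_eval_neg_one (m : ℕ) :
    (derivative (L (m + 1))).eval (-1) =
      (-1 : ℝ) ^ m * (((m : ℝ) + 1) * ((m : ℝ) + 2) / 2) := by
  rw [derivative_L]
  simp only [eval_mul, eval_C]
  rw [show m + 1 + 1 = m + 2 from rfl, evalWm1_neg_one]
  have h1 : (Nat.factorial (m + 1) : ℝ) ≠ 0 := by positivity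
  have h2 : (-2 : ℝ) ^ m = (-1 : ℝ) ^ m * 2 ^ m := by
    rw [← mul_pow]; norm_num
  have h4 : (2 : ℝ) ^ (m + 1) = 2 * 2 ^ m := by ring
  rw [h2, h4]
  have h3 : (2 : ℝ) ^ m ≠ 0 := by positivity
  field_simp

lemma I2_mul_right (a : ℝ) (p q : ℝ[X]) : I2 p (C a * q) = a * I2 p q := by
  rw [I2_symm, I2_C_mul, I2_symm]

lemma I2_sub_right (p q r : ℝ[X]) : I2 p (q - r) = I2 p q - I2 p r := by
  rw [I2_symm, I2_sub, I2_symm q p, I2_symm r p]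

lemma ibp' (p q : ℝ[X]) :
    I2 (derivative p) q =
      p.eval 1 * q.eval 1 - p.eval (-1) * q.eval (-1) - I2 p (derivative q) := ibp p q

lemma natDegree_dL (m : ℕ) : (derivative (L m)).natDegree ≤ m - 1 :=
  (natDegree_derivative_le _).trans (Nat.sub_le_sub_right (natDegree_L _) 1)

lemma I2_L_L_ne (k n : ℕ) (h : k ≠ n) : I2 (L k) (L n) = 0 := by
  rcases Nat.lt_or_ge k n with hlt | hge
  · exact I2_L_eq_zero n (L k) (lt_of_le_of_lt (natDegree_L k) hlt)
  · rw [I2_symm]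
    exact I2_L_eq_zero k (L n) (lt_of_le_of_lt (natDegree_L n) (by omega))

lemma I2_dL_L (m n : ℕ) (h : m < n) : I2 (derivative (L m)) (L n) = 0 :=
  I2_L_eq_zero n _ (lt_of_le_of_lt (natDegree_dL m) (by omega))

lemma I2_L_dL (k m : ℕ) (h : m ≤ k) (hk : 1 ≤ k) : I2 (L k) (derivative (L m)) = 0 := by
  rw [I2_symm]
  exact I2_L_eq_zero k _ (lt_of_le_of_lt (natDegree_dL m) (by omega))

lemma I2_dL_L_cross (m k : ℕ) (hk : k ≤ m) :
    I2 (derivative (L (m + 1))) (L k) = 1 - (-1 : ℝ) ^ (m + 1) * (-1 : ℝ) ^ k := by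
  rw [ibp' (L (m+1)) (L k), L_eval_one, L_eval_one, L_eval_neg_one, L_eval_neg_one]
  have h0 : I2 (L (m + 1)) (derivative (L k)) = 0 := by
    rw [I2_symm]
    exact I2_L_eq_zero (m+1) _ (lt_of_le_of_lt (natDegree_dL k) (by omega))
  rw [h0]
  ring

lemma I2_dL_dL (a b : ℕ) (hab : a ≤ b) :
    I2 (derivative (L (a + 1))) (derivative (L (b + 1))) =
      (((a : ℝ) + 1) * ((a : ℝ) + 2) / 2) * (1 - (-1 : ℝ) ^ (b + 1) * (-1 : ℝ) ^ a) := by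
  rw [I2_symm, ibp' (L (b+1)) (derivative (L (a+1))), L_eval_one, L_eval_neg_one,
    dL_eval_one, dL_eval_neg_one]
  have h0 : I2 (L (b + 1)) (derivative (derivative (L (a + 1)))) = 0 := by
    rw [I2_symm]
    refine I2_L_eq_zero (b+1) _ ?_
    have h1 := natDegree_derivative_le (derivative (L (a+1)))
    have h2 := natDegree_dL (a+1)
    omega
  rw [h0]
  ring

/-- The polynomial representing `tildeP n`. -/
noncomputable def T (n : ℕ) : ℝ[X] :=
  C (1 / ((n : ℝ) + 2)) *
    (C (n : ℝ) * L n - C (2 / ((n : ℝ) - 1)) * derivative (L (n - 1)))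

lemma tildeP_eq (n : ℕ) (z : ℝ) : tildeP n z = (T n).eval z := by
  rw [tildeP, deriv_legendreP, legendreP_eq]
  simp [T]

lemma I2_T_right (p : ℝ[X]) (n : ℕ) :
    I2 p (T n) = (1 / ((n : ℝ) + 2)) *
      ((n : ℝ) * I2 p (L n) - (2 / ((n : ℝ) - 1)) * I2 p (derivative (L (n - 1)))) := by
  rw [T, I2_mul_right, I2_sub_right, I2_mul_right, I2_mul_right]

lemma I2_T_T (k n : ℕ) :
    I2 (T k) (T n) = (1 / ((k : ℝ) + 2)) * (1 / ((n : ℝ) + 2)) *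
      ((k : ℝ) * (n : ℝ) * I2 (L k) (L n)
        - (k : ℝ) * (2 / ((n : ℝ) - 1)) * I2 (L k) (derivative (L (n - 1)))
        - (n : ℝ) * (2 / ((k : ℝ) - 1)) * I2 (derivative (L (k - 1))) (L n)
        + (2 / ((k : ℝ) - 1)) * (2 / ((n : ℝ) - 1)) *
            I2 (derivative (L (k - 1))) (derivative (L (n - 1)))) := by
  have h1 : I2 (T k) (T n) =
      (1 / ((k : ℝ) + 2)) * ((k : ℝ) * I2 (L k) (T n)
        - (2 / ((k : ℝ) - 1)) * I2 (derivative (L (k - 1))) (T n)) := by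
    have e : T k = C (1 / ((k : ℝ) + 2)) *
        (C (k : ℝ) * L k - C (2 / ((k : ℝ) - 1)) * derivative (L (k - 1))) := rfl
    rw [e, I2_C_mul, I2_sub, I2_C_mul, I2_C_mul]
  rw [h1, I2_T_right, I2_T_right]
  ring

lemma integral_tildeP (k n : ℕ) :
    (∫ z in (-1 : ℝ)..1, tildeP k z * tildeP n z) = I2 (T k) (T n) := by
  unfold I2
  congr 1
  funext z
  rw [tildeP_eq, tildeP_eq]

lemma diag_arith (x : ℝ) (h1 : x + 1 ≠ 0) (h2 : x + 4 ≠ 0) (h3 : 2*x + 5 ≠ 0) :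
    (1/(x+2+2))*(1/(x+2+2))*((x+2)*(x+2)*(2/(2*(x+2)+1)) - (x+2)*(2/(x+2-1))*0 - (x+2)*(2/(x+2-1))*0
      + (2/(x+2-1))*(2/(x+2-1))*((x+1)*(x+2)/2*2)) =
    (2*(x+2)*((x+2)+1))/(((x+2)-1)*((x+2)+2)*(2*(x+2)+1)) := by
  have h4 : (x+2)-1 = x+1 := by ring
  have h6 : 2*(x+2)+1 = 2*x+5 := by ring
  rw [h4, h6, show x+2+2 = x+4 by ring]
  field_simp
  linear_combination (-(2*x+4)) * mul_inv_cancel₀ h3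

lemma neg_one_pow_two_mul (a : ℕ) : ((-1:ℝ)) ^ (a + 1) * (-1:ℝ) ^ a = -1 := by
  rw [← pow_add, show a + 1 + a = 2 * a + 1 by ring, pow_succ, pow_mul]
  norm_num

lemma I2_T_T_cross (a b : ℕ) (h : a < b) : I2 (T (a + 2)) (T (b + 2)) = 0 := by
  rw [I2_T_T]
  have hs1 : a + 2 - 1 = a + 1 := rfl
  have hs2 : b + 2 - 1 = b + 1 := rfl
  rw [hs1, hs2]
  have t1 : I2 (L (a + 2)) (L (b + 2)) = 0 := I2_L_L_ne _ _ (by omega)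
  have t3 : I2 (derivative (L (a + 1))) (L (b + 2)) = 0 := I2_dL_L _ _ (by omega)
  have t2 : I2 (L (a + 2)) (derivative (L (b + 1))) =
      1 - (-1 : ℝ) ^ (b + 1) * (-1 : ℝ) ^ a := by
    have hpow : ((-1:ℝ)) ^ (a + 2) = (-1:ℝ) ^ a := by
      rw [pow_add]; norm_num
    rcases Nat.lt_or_ge (a + 2) (b + 1) with h2 | h2
    · rw [I2_symm, I2_dL_L_cross b (a+2) (by omega), hpow]
    · have hb : b = a + 1 := by omega
      subst hb
      rw [I2_L_dL _ _ (by omega) (by omega)]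
      rw [show a + 1 + 1 = a + 2 from rfl, hpow]
      have hsq : ((-1:ℝ)) ^ a * (-1:ℝ) ^ a = 1 := by
        rw [← pow_add, ← two_mul, pow_mul]; norm_num
      linarith [hsq]
  have t4 := I2_dL_dL a b (by omega)
  rw [t1, t2, t3, t4]
  have ha1 : ((a:ℝ) + 1) ≠ 0 := by positivity
  have hb1 : ((b:ℝ) + 1) ≠ 0 := by positivity
  have inner : (-(((a:ℝ)) + 2)) * (2 / (((b:ℝ)) + 1)) +
      (2 / (((a:ℝ)) + 1)) * (2 / (((b:ℝ)) + 1)) * ((((a:ℝ)) + 1) * (((a:ℝ)) + 2) / 2) = 0 := by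
    field_simp
    ring
  push_cast
  linear_combination (1 / (((a:ℝ)) + 2 + 2)) * (1 / (((b:ℝ)) + 2 + 2)) *
    (1 - (-1:ℝ) ^ (b+1) * (-1:ℝ) ^ a) * inner

/-- Orthogonality of the polynomials `P̃_n`:
`∫_{-1}^{1} P̃_k P̃_n dz = c_n δ_{kn}` with
`c_n = 2n(n+1) / ((n-1)(n+2)(2n+1))`. -/
theorem tildeP_orthogonality (k n : ℕ) (hk : 2 ≤ k) (hn : 2 ≤ n) :
    ∫ z in (-1 : ℝ)..1, tildeP k z * tildeP n z =
      if k = n then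
        (2 * (n : ℝ) * ((n : ℝ) + 1)) /
          (((n : ℝ) - 1) * ((n : ℝ) + 2) * (2 * (n : ℝ) + 1))
      else 0 := by
  obtain ⟨a, rfl⟩ : ∃ a, k = a + 2 := ⟨k - 2, by omega⟩
  obtain ⟨b, rfl⟩ : ∃ b, n = b + 2 := ⟨n - 2, by omega⟩
  by_cases hab : a = b
  · subst hab
    rw [if_pos rfl, integral_tildeP, I2_T_T]
    rw [show a + 2 - 1 = a + 1 from rfl]
    rw [I2_L_self, I2_L_dL _ _ (by omega) (by omega), I2_dL_L _ _ (by omega),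
      I2_dL_dL a a le_rfl]
    have hm1 := neg_one_pow_two_mul a
    rw [show (1 : ℝ) - (-1:ℝ) ^ (a+1) * (-1:ℝ) ^ a = 2 by rw [sub_eq_iff_eq_add]; linarith]
    have h1 : ((a:ℝ) + 1) ≠ 0 := by positivity
    have h2 : ((a:ℝ) + 4) ≠ 0 := by positivity
    have h3 : (2 * (a:ℝ) + 5) ≠ 0 := by positivity
    push_cast
    exact diag_arith (a:ℝ) h1 h2 h3
  · rw [if_neg (by omega)]
    rcases Nat.lt_or_ge a b with h | h
    · rw [integral_tildeP, I2_T_T_cross a b h]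
    · have hflip : (∫ z in (-1:ℝ)..1, tildeP (a+2) z * tildeP (b+2) z) =
          ∫ z in (-1:ℝ)..1, tildeP (b+2) z * tildeP (a+2) z := by
        congr 1; funext z; ring
      rw [hflip, integral_tildeP, I2_T_T_cross b a (by omega)]
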